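/- For nonnegative integers k, m, s with s > k, the alternating sum over i from 0 to m of (−1)^i · C(2k+1, s+i) · C(k+i, k) · C(k+m−i, k) equals C(m+s−k−1, m) · C(2k+m+1, m+s). -/

import Mathlib

private def wzG (k s m : ℕ) (i : ℕ) : ℤ :=
  -(-1 : ℤ) ^ i * (i : ℤ) * ((s + i : ℕ) : ℤ) * ((2 * k + 1).choose (s + i) : ℤ) *
    ((k + i).choose k : ℤ) * ((k + m + 1 - i).choose k : ℤ)

private lemma mul_choose_aux (k i : ℕ) :
    (i + 1) * (k + i + 1).choose k = (k + i + 1) * (k + i).choose k := by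
  have h1 : (k + i).choose i = (k + i).choose k := by
    have h := Nat.choose_symm (n := k + i) (k := k) (Nat.le_add_right k i)
    rwa [show k + i - k = i from by omega] at h
  have h2 : (k + i + 1).choose (i + 1) = (k + i + 1).choose k := by
    have h := Nat.choose_symm (n := k + i + 1) (k := k) (by omega)
    rwa [show k + i + 1 - k = i + 1 from by omega] at h
  have h3 := Nat.add_one_mul_choose_eq (k + i) i
  simp only [Nat.succ_eq_add_one, h1, h2] at h3
  rw [h3, Nat.mul_comm]

private lemma wz_point (k s m i : ℕ) (hs : k < s) (him : i ≤ m) :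
    ((m + 1) * (m + s + 1) : ℤ) *
        ((-1 : ℤ) ^ i * ((2 * k + 1).choose (s + i)) * ((k + i).choose k) *
          ((k + (m + 1) - i).choose k))
      - (((m + s - k) * (2 * k + m + 2) : ℕ) : ℤ) *
        ((-1 : ℤ) ^ i * ((2 * k + 1).choose (s + i)) * ((k + i).choose k) *
          ((k + m - i).choose k))
      = wzG k s m (i + 1) - wzG k s m i := by
  obtain ⟨d, rfl⟩ : ∃ d, m = i + d := ⟨m - i, by omega⟩
  obtain ⟨v, rfl⟩ : ∃ v, s = k + 1 + v := ⟨s - (k + 1), by omega⟩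
  unfold wzG
  by_cases hle : v + i ≤ k
  · obtain ⟨e, rfl⟩ : ∃ e, k = v + i + e := ⟨k - (v + i), by omega⟩
    rw [show v + i + e + (i + d + 1) - i = v + i + e + d + 1 from by omega,
        show v + i + e + (i + d) - i = v + i + e + d from by omega,
        show v + i + e + (i + d) + 1 - (i + 1) = v + i + e + d from by omega,
        show v + i + e + (i + d) + 1 - i = v + i + e + d + 1 from by omega,
        show i + d + (v + i + e + 1 + v) - (v + i + e) = i + d + v + 1 from by omega,
        show v + i + e + 1 + v + (i + 1) = v + i + e + 1 + v + i + 1 from by omega,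
        show v + i + e + (i + 1) = v + i + e + i + 1 from by omega]
    have H1n := Nat.choose_succ_right_eq (2 * (v + i + e) + 1) (v + i + e + 1 + v + i)
    rw [show 2 * (v + i + e) + 1 - (v + i + e + 1 + v + i) = e from by omega] at H1n
    have H1 : ((2 * (v + i + e) + 1).choose (v + i + e + 1 + v + i + 1) : ℤ) *
        ((v + i + e + 1 + v + i : ℕ) + 1) =
        ((2 * (v + i + e) + 1).choose (v + i + e + 1 + v + i) : ℤ) * e := by
      exact_mod_cast H1n
    have H2 : ((i : ℤ) + 1) * ((v + i + e + i + 1).choose (v + i + e) : ℤ) =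
        ((v + i + e + i : ℕ) + 1) * ((v + i + e + i).choose (v + i + e) : ℤ) := by
      exact_mod_cast mul_choose_aux (v + i + e) i
    have H3 : ((d : ℤ) + 1) * ((v + i + e + d + 1).choose (v + i + e) : ℤ) =
        ((v + i + e + d : ℕ) + 1) * ((v + i + e + d).choose (v + i + e) : ℤ) := by
      exact_mod_cast mul_choose_aux (v + i + e) d
    push_cast
    push_cast at H1 H2 H3
    linear_combination
      (-(-1 : ℤ) ^ i * ((i : ℤ) + 1) *
          ((v + i + e + i + 1).choose (v + i + e) : ℤ) *
          ((v + i + e + d).choose (v + i + e) : ℤ)) * H1 +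
      (-(-1 : ℤ) ^ i * (e : ℤ) *
          ((2 * (v + i + e) + 1).choose (v + i + e + 1 + v + i) : ℤ) *
          ((v + i + e + d).choose (v + i + e) : ℤ)) * H2 +
      ((-1 : ℤ) ^ i * ((i : ℤ) + d + (v + i + e) + 1 + v + 1 + i) *
          ((2 * (v + i + e) + 1).choose (v + i + e + 1 + v + i) : ℤ) *
          ((v + i + e + i).choose (v + i + e) : ℤ)) * H3
  · have hA : (2 * k + 1).choose (k + 1 + v + i) = 0 :=
      Nat.choose_eq_zero_of_lt (by omega)
    have hA' : (2 * k + 1).choose (k + 1 + v + (i + 1)) = 0 :=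
      Nat.choose_eq_zero_of_lt (by omega)
    rw [hA, hA']
    push_cast
    ring

private lemma wz_edge (k s m : ℕ) (hs : k < s) :
    ((m + 1) * (m + s + 1) : ℤ) *
        ((-1 : ℤ) ^ (m + 1) * ((2 * k + 1).choose (s + (m + 1))) * ((k + (m + 1)).choose k) *
          ((k + (m + 1) - (m + 1)).choose k))
      - (((m + s - k) * (2 * k + m + 2) : ℕ) : ℤ) *
        ((-1 : ℤ) ^ (m + 1) * ((2 * k + 1).choose (s + (m + 1))) * ((k + (m + 1)).choose k) *
          ((k + m - (m + 1)).choose k))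
      = wzG k s m (m + 1 + 1) - wzG k s m (m + 1) := by
  unfold wzG
  rw [show k + (m + 1) - (m + 1) = k from by omega,
      show k + m + 1 - (m + 1) = k from by omega]
  simp only [Nat.choose_self]
  rcases Nat.eq_zero_or_pos k with hk | hk
  · subst hk
    have hA : (2 * 0 + 1).choose (s + (m + 1)) = 0 := Nat.choose_eq_zero_of_lt (by omega)
    have hA2 : (2 * 0 + 1).choose (s + (m + 1 + 1)) = 0 := Nat.choose_eq_zero_of_lt (by omega)
    rw [hA, hA2]
    push_cast
    ring
  · obtain ⟨k', rfl⟩ : ∃ k', k = k' + 1 := ⟨k - 1, by omega⟩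
    rw [show k' + 1 + m - (m + 1) = k' from by omega,
        show k' + 1 + m + 1 - (m + 1 + 1) = k' from by omega]
    simp only [Nat.choose_succ_self]
    push_cast
    ring

private lemma wzG_end (k s m : ℕ) (hs : k < s) : wzG k s m (m + 1 + 1) = 0 := by
  unfold wzG
  rcases Nat.eq_zero_or_pos k with hk | hk
  · subst hk
    rw [Nat.choose_eq_zero_of_lt (show 2 * 0 + 1 < s + (m + 1 + 1) from by omega)]
    ring
  · obtain ⟨k', rfl⟩ : ∃ k', k = k' + 1 := ⟨k - 1, by omega⟩
    rw [show k' + 1 + m + 1 - (m + 1 + 1) = k' from by omega, Nat.choose_succ_self]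
    push_cast
    ring

private lemma sum_rec (k s m : ℕ) (hs : k < s) :
    ((m + 1) * (m + s + 1) : ℤ) *
        ∑ i ∈ Finset.range (m + 1 + 1),
          (-1 : ℤ) ^ i * ((2 * k + 1).choose (s + i)) * ((k + i).choose k) *
            ((k + (m + 1) - i).choose k)
      = (((m + s - k) * (2 * k + m + 2) : ℕ) : ℤ) *
        ∑ i ∈ Finset.range (m + 1 + 1),
          (-1 : ℤ) ^ i * ((2 * k + 1).choose (s + i)) * ((k + i).choose k) *
            ((k + m - i).choose k) := by
  rw [Finset.mul_sum, Finset.mul_sum, ← sub_eq_zero, ← Finset.sum_sub_distrib]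
  have hcongr : ∀ i ∈ Finset.range (m + 1 + 1),
      ((m + 1) * (m + s + 1) : ℤ) *
          ((-1 : ℤ) ^ i * ((2 * k + 1).choose (s + i)) * ((k + i).choose k) *
            ((k + (m + 1) - i).choose k))
        - (((m + s - k) * (2 * k + m + 2) : ℕ) : ℤ) *
          ((-1 : ℤ) ^ i * ((2 * k + 1).choose (s + i)) * ((k + i).choose k) *
            ((k + m - i).choose k))
        = wzG k s m (i + 1) - wzG k s m i := by
    intro i hi
    rcases Nat.lt_or_ge i (m + 1) with h | h
    · exact wz_point k s m i hs (by omega)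
    · have : i = m + 1 := by
        have := Finset.mem_range.mp hi; omega
      subst this
      exact wz_edge k s m hs
  rw [Finset.sum_congr rfl hcongr, Finset.sum_range_sub (wzG k s m), wzG_end k s m hs]
  unfold wzG
  push_cast
  ring

private lemma rhs_rec (k s m : ℕ) (hs : k < s) :
    ((m + 1) * (m + s + 1) : ℤ) *
        (((m + 1 + s - k - 1).choose (m + 1) : ℤ) * ((2 * k + (m + 1) + 1).choose (m + 1 + s)))
      = (((m + s - k) * (2 * k + m + 2) : ℕ) : ℤ) *
        (((m + s - k - 1).choose m : ℤ) * ((2 * k + m + 1).choose (m + s))) := by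
  obtain ⟨v, rfl⟩ : ∃ v, s = k + 1 + v := ⟨s - (k + 1), by omega⟩
  rw [show m + 1 + (k + 1 + v) - k - 1 = m + v + 1 from by omega,
      show m + (k + 1 + v) - k - 1 = m + v from by omega,
      show m + (k + 1 + v) - k = m + v + 1 from by omega,
      show 2 * k + (m + 1) + 1 = 2 * k + m + 2 from by omega,
      show m + 1 + (k + 1 + v) = m + (k + 1 + v) + 1 from by omega]
  have A := Nat.add_one_mul_choose_eq (m + v) m
  have B := Nat.add_one_mul_choose_eq (2 * k + m + 1) (m + (k + 1 + v))
  rw [show 2 * k + m + 1 + 1 = 2 * k + m + 2 from by omega] at B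
  have A' : ((m : ℤ) + v + 1) * ((m + v).choose m : ℤ) =
      ((m + v + 1).choose (m + 1) : ℤ) * ((m : ℤ) + 1) := by exact_mod_cast A
  have B' : (2 * (k : ℤ) + m + 2) * ((2 * k + m + 1).choose (m + (k + 1 + v)) : ℤ) =
      ((2 * k + m + 2).choose (m + (k + 1 + v) + 1) : ℤ) *
        ((m + (k + 1 + v) : ℕ) + 1 : ℤ) := by exact_mod_cast B
  push_cast
  push_cast at B'
  linear_combination
    (-((m : ℤ) + k + v + 2) * ((2 * k + m + 2).choose (m + (k + 1 + v) + 1) : ℤ)) * A' +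
    (-((m : ℤ) + v + 1) * ((m + v).choose m : ℤ)) * B'

theorem alt_sum_choose_of_gt (k m s : ℕ) (hs : k < s) :
    ∑ i ∈ Finset.range (m + 1),
      (-1 : ℤ) ^ i * ((2 * k + 1).choose (s + i)) * ((k + i).choose k) *
        ((k + m - i).choose k)
      = ((m + s - k - 1).choose m : ℤ) * ((2 * k + m + 1).choose (m + s)) := by
  induction m with
  | zero =>
      simp [Finset.sum_range_one, Nat.choose_self]
  | succ n ih =>
      have h1 := sum_rec k s n hs
      have hz : ((-1 : ℤ) ^ (n + 1) * ((2 * k + 1).choose (s + (n + 1))) *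
          ((k + (n + 1)).choose k) * ((k + n - (n + 1)).choose k)) = 0 := by
        rcases Nat.eq_zero_or_pos k with hk | hk
        · subst hk
          rw [Nat.choose_eq_zero_of_lt (show 2 * 0 + 1 < s + (n + 1) from by omega)]
          ring
        · obtain ⟨k', rfl⟩ : ∃ k', k = k' + 1 := ⟨k - 1, by omega⟩
          rw [show k' + 1 + n - (n + 1) = k' from by omega, Nat.choose_succ_self]
          push_cast
          ring
      conv at h1 => rhs; rw [Finset.sum_range_succ]
      rw [hz, add_zero, ih] at h1
      have h2 := rhs_rec k s n hs
      have hc : ((n : ℤ) + 1) * ((n : ℤ) + s + 1) ≠ 0 := by positivity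
      exact mul_left_cancel₀ hc (h1.trans h2.symm)
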